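/- Let H be a connected r-uniform linear hypergraph (any two edges share at most one vertex) with spectral radius ρ and principal eigenvector x (positive, ∑ x_i^r = 1). For a vertex v of degree d, x_v ≤ (1 + (r−1)·(ρ^r/d)^{1/(r−1)})^{−1/r}. -/

import Mathlib

lemma amgm_edge {ι : Type*} (r : ℕ) (hr : 2 ≤ r) (s : Finset ι) (hcard : s.card = r - 1)
    (x : ι → ℝ) (hx : ∀ i, 0 < x i) :
    ∏ j ∈ s, x j ≤ ((∑ j ∈ s, x j ^ r) / ((r : ℝ) - 1)) ^ (((r : ℝ) - 1) / r) := by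
  have hR2 : (2:ℝ) ≤ (r:ℝ) := by exact_mod_cast hr
  set R : ℝ := (r : ℝ) with hR
  have hR1 : (0:ℝ) < R - 1 := by linarith
  have hR0 : (0:ℝ) < R := by linarith
  have hw' : ∑ _i ∈ s, (R - 1)⁻¹ = 1 := by
    rw [Finset.sum_const, hcard, nsmul_eq_mul]
    rw [Nat.cast_sub (by omega : 1 ≤ r)]
    push_cast
    field_simp
    rfl
  have key := Real.geom_mean_le_arith_mean_weighted s (fun _ => (R - 1)⁻¹)
    (fun j => x j ^ r) (fun i _ => inv_nonneg.mpr hR1.le) hw' (fun i _ => pow_nonneg (hx i).le r)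
  have hlhs : ∏ j ∈ s, ((x j ^ r : ℝ)) ^ ((R-1)⁻¹) = (∏ j ∈ s, x j) ^ (R * (R-1)⁻¹) := by
    rw [← Real.finset_prod_rpow s _ (fun i _ => (hx i).le)]
    refine Finset.prod_congr rfl fun j _ => ?_
    rw [← Real.rpow_natCast (x j) r, ← Real.rpow_mul (hx j).le]
  rw [hlhs] at key
  have hsum : ∑ i ∈ s, (R-1)⁻¹ * x i ^ r = (∑ j ∈ s, x j ^ r) / (R - 1) := by
    rw [← Finset.mul_sum]
    ring
  rw [hsum] at key
  have hP : (0:ℝ) < ∏ j ∈ s, x j := Finset.prod_pos (fun i _ => hx i)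
  have := Real.rpow_le_rpow (by positivity) key (by positivity : (0:ℝ) ≤ (R-1)/R)
  rwa [← Real.rpow_mul hP.le, show R * (R-1)⁻¹ * ((R-1)/R) = 1 by field_simp,
    Real.rpow_one] at this

lemma pow_mean_sum {ι : Type*} (s : Finset ι) (hs : s.Nonempty) (t : ι → ℝ)
    (ht : ∀ i ∈ s, 0 ≤ t i) {β : ℝ} (hβ0 : 0 < β) (hβ1 : β ≤ 1) :
    ∑ i ∈ s, t i ^ β ≤ (s.card : ℝ) ^ (1 - β) * (∑ i ∈ s, t i) ^ β := by
  have hc : (0:ℝ) < s.card := by exact_mod_cast Finset.card_pos.mpr hs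
  have key := Real.arith_mean_le_rpow_mean s (fun _ => ((s.card : ℝ))⁻¹)
    (fun i => t i ^ β) (fun i _ => by positivity)
    (by rw [Finset.sum_const, nsmul_eq_mul]; field_simp)
    (fun i hi => Real.rpow_nonneg (ht i hi) _) (p := 1/β)
    (by rw [le_div_iff₀ hβ0]; linarith)
  rw [one_div_one_div] at key
  have h1 : ∀ i ∈ s, ((s.card:ℝ))⁻¹ * (t i ^ β) ^ (1/β) = ((s.card:ℝ))⁻¹ * t i := by
    intro i hi
    rw [← Real.rpow_mul (ht i hi), mul_one_div, div_self hβ0.ne', Real.rpow_one]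
  rw [Finset.sum_congr rfl h1, ← Finset.mul_sum, ← Finset.mul_sum] at key
  have hfinal : (s.card:ℝ) * ((s.card:ℝ)⁻¹)^β = (s.card:ℝ)^(1-β) := by
    rw [Real.inv_rpow hc.le, ← Real.rpow_neg hc.le]
    nth_rewrite 1 [← Real.rpow_one ((s.card:ℝ))]
    rw [← Real.rpow_add hc]
    rw [← sub_eq_add_neg]
  have hA : ∑ i ∈ s, t i ^ β = (s.card:ℝ) * (((s.card:ℝ))⁻¹ * ∑ i ∈ s, t i ^ β) := by
    rw [← mul_assoc, mul_inv_cancel₀ hc.ne', one_mul]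
  rw [hA]
  calc (s.card:ℝ) * (((s.card:ℝ))⁻¹ * ∑ i ∈ s, t i ^ β)
      ≤ (s.card:ℝ) * (((s.card:ℝ))⁻¹ * ∑ i ∈ s, t i) ^ β :=
        mul_le_mul_of_nonneg_left key hc.le
    _ = (s.card : ℝ) ^ (1 - β) * (∑ i ∈ s, t i) ^ β := by
        rw [Real.mul_rpow (inv_nonneg.mpr hc.le) (Finset.sum_nonneg ht), ← mul_assoc, hfinal]

/-- `hconn E k u v` : there is a walk of length `k` from `u` to `v` in the hypergraph
with edge set `E`, i.e. an alternating sequence of vertices and edges where consecutive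
vertices both lie in the connecting edge. -/
def hconn {n : ℕ} (E : Finset (Finset (Fin n))) : ℕ → Fin n → Fin n → Prop
  | 0, u, v => u = v
  | k + 1, u, v => ∃ e ∈ E, ∃ w ∈ e, u ∈ e ∧ hconn E k w v

/-- Distance between two vertices of a hypergraph: minimum length of a connecting walk. -/
noncomputable def hdist {n : ℕ} (E : Finset (Finset (Fin n))) (u v : Fin n) : ℕ :=
  sInf {k | hconn E k u v}

/-- Diameter of a hypergraph: maximum distance between two vertices. -/
noncomputable def hdiam {n : ℕ} (E : Finset (Finset (Fin n))) : ℕ :=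
  sSup {d | ∃ u v : Fin n, hdist E u v = d}

/-- A hypergraph is connected if any two vertices are joined by a walk. -/
def HConnected {n : ℕ} (E : Finset (Finset (Fin n))) : Prop :=
  ∀ u v : Fin n, ∃ k, hconn E k u v

/-- Degree of a vertex: the number of edges containing it. -/
def hdeg {n : ℕ} (E : Finset (Finset (Fin n))) (v : Fin n) : ℕ :=
  (E.filter (fun e => v ∈ e)).card

/-- The eigenvalue equation `A(H) x^{r-1} = ρ x^{[r-1]}` for the adjacency tensor of an
`r`-uniform hypergraph with edge set `E`: the `i`-th entry of `A(H) x^{r-1}` equals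
`∑_{e ∋ i} ∏_{j ∈ e \ {i}} x_j`. -/
def EigenEq {n : ℕ} (E : Finset (Finset (Fin n))) (r : ℕ) (ρ : ℝ) (x : Fin n → ℝ) : Prop :=
  ∀ i : Fin n, ∑ e ∈ E.filter (fun e => i ∈ e), ∏ j ∈ e.erase i, x j = ρ * x i ^ (r - 1)

theorem stmt_16 (n r : ℕ) (hr : 2 ≤ r) (E : Finset (Finset (Fin n)))
    (hu : ∀ e ∈ E, e.card = r) (hc : HConnected E)
    (hlin : ∀ e ∈ E, ∀ f ∈ E, e ≠ f → (e ∩ f).card ≤ 1)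
    (ρ : ℝ) (x : Fin n → ℝ) (hx : ∀ i, 0 < x i) (hnorm : ∑ i, x i ^ r = 1)
    (heig : EigenEq E r ρ x)
    (v : Fin n) (d : ℕ) (hd : hdeg E v = d) :
    x v ≤ (1 + ((r : ℝ) - 1) * (ρ ^ r / d) ^ ((1 : ℝ) / ((r : ℝ) - 1))) ^
      (-(1 : ℝ) / r) := by
  have hR2 : (2:ℝ) ≤ (r:ℝ) := by exact_mod_cast hr
  have hR1 : (0:ℝ) < (r:ℝ) - 1 := by linarith
  have hR0 : (0:ℝ) < (r:ℝ) := by linarith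
  set a := x v with ha_def
  have ha : 0 < a := hx v
  have har : a ^ r ≤ 1 := by
    rw [← hnorm]
    exact Finset.single_le_sum (fun i _ => (pow_nonneg (hx i).le r)) (Finset.mem_univ v)
  set Ev := E.filter (fun e => v ∈ e) with hEv
  have hEvcard : Ev.card = d := hd
  by_cases hd0 : d = 0
  · subst hd0
    have hEvempty : Ev = ∅ := Finset.card_eq_zero.mp hEvcard
    have h0 : (0:ℝ) = ρ * a ^ (r-1) := by
      have hh := heig v
      rw [← hEv, hEvempty] at hh
      simpa using hh.symm
    have hρ : ρ = 0 := (mul_eq_zero.mp h0.symm).resolve_right (pow_pos ha (r-1)).ne'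
    rw [hρ, zero_pow (by omega : r ≠ 0)]
    rw [show ((0:ℝ)/((0:ℕ):ℝ)) = 0 by simp, Real.zero_rpow (by positivity : (1:ℝ)/((r:ℝ)-1) ≠ 0)]
    rw [mul_zero, add_zero, Real.one_rpow]
    exact (pow_le_one_iff_of_nonneg ha.le (by omega)).mp har
  · have hdpos : (0:ℝ) < (d:ℝ) := by exact_mod_cast Nat.pos_of_ne_zero hd0
    set β : ℝ := ((r:ℝ)-1)/(r:ℝ) with hβ
    have hβ0 : 0 < β := by positivity
    have hβ1 : β ≤ 1 := by rw [hβ, div_le_one hR0]; linarith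
    have hEcard : ∀ e ∈ Ev, (e.erase v).card = r - 1 := fun e he => by
      rw [Finset.card_erase_of_mem (Finset.mem_filter.mp he).2, hu e (Finset.mem_filter.mp he).1]
    set S : Finset (Fin n) → ℝ := fun e => ∑ j ∈ e.erase v, x j ^ r with hS
    have h1 : ρ * a ^ (r-1) ≤ ∑ e ∈ Ev, (S e / ((r:ℝ)-1)) ^ β := by
      rw [← heig v]
      exact Finset.sum_le_sum fun e he => amgm_edge r hr _ (hEcard e he) x hx
    have hSnn : ∀ e ∈ Ev, 0 ≤ S e / ((r:ℝ)-1) := fun e _ =>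
      div_nonneg (Finset.sum_nonneg fun j _ => pow_nonneg (hx j).le r) hR1.le
    have hEvne : Ev.Nonempty := Finset.card_pos.mp (hEvcard ▸ Nat.pos_of_ne_zero hd0)
    have h2 := pow_mean_sum Ev hEvne (fun e => S e / ((r:ℝ)-1)) hSnn hβ0 hβ1
    have h3 : ∑ e ∈ Ev, S e ≤ 1 - a ^ r := by
      have hdisj : (Ev : Set (Finset (Fin n))).PairwiseDisjoint (fun e => e.erase v) := by
        intro e he f hf hef
        simp only [Finset.mem_coe] at he hf
        have heE := (Finset.mem_filter.mp he).1
        have hev := (Finset.mem_filter.mp he).2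
        have hfE := (Finset.mem_filter.mp hf).1
        have hfv := (Finset.mem_filter.mp hf).2
        rw [Function.onFun, Finset.disjoint_left]
        intro j hje hjf
        have hcard := hlin e heE f hfE hef
        have hsub : ({v, j} : Finset (Fin n)) ⊆ e ∩ f := by
          intro k hk
          rcases Finset.mem_insert.mp hk with hk | hk
          · subst hk; exact Finset.mem_inter.mpr ⟨hev, hfv⟩
          · rw [Finset.mem_singleton] at hk; subst hk
            exact Finset.mem_inter.mpr ⟨(Finset.mem_erase.mp hje).2, (Finset.mem_erase.mp hjf).2⟩
        have h2c : 2 ≤ (e ∩ f).card := by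
          calc 2 = ({v, j} : Finset (Fin n)).card :=
                (Finset.card_pair (Ne.symm (Finset.mem_erase.mp hje).1)).symm
            _ ≤ (e ∩ f).card := Finset.card_le_card hsub
        omega
      calc ∑ e ∈ Ev, S e = ∑ j ∈ Ev.biUnion (fun e => e.erase v), x j ^ r :=
            (Finset.sum_biUnion hdisj).symm
        _ ≤ ∑ j ∈ Finset.univ.erase v, x j ^ r := by
            refine Finset.sum_le_sum_of_subset_of_nonneg ?_ (fun i _ _ => pow_nonneg (hx i).le r)
            intro j hj
            rcases Finset.mem_biUnion.mp hj with ⟨e, _, hje⟩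
            exact Finset.mem_erase.mpr ⟨(Finset.mem_erase.mp hje).1, Finset.mem_univ j⟩
        _ = 1 - a ^ r := by rw [Finset.sum_erase_eq_sub (Finset.mem_univ v), hnorm]
    have h1a : (0:ℝ) ≤ 1 - a^r := by linarith
    have h4 : ρ * a ^ (r-1) ≤ (d:ℝ)^((1:ℝ)/(r:ℝ)) * ((1 - a^r)/((r:ℝ)-1)) ^ β := by
      refine h1.trans (h2.trans ?_)
      rw [hEvcard, ← Finset.sum_div, show (1:ℝ) - β = 1/(r:ℝ) by rw [hβ]; field_simp; ring]
      refine mul_le_mul_of_nonneg_left ?_ (Real.rpow_nonneg hdpos.le _)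
      refine Real.rpow_le_rpow (div_nonneg (Finset.sum_nonneg fun e _ =>
        Finset.sum_nonneg fun j _ => pow_nonneg (hx j).le r) hR1.le) ?_ hβ0.le
      exact div_le_div_of_nonneg_right h3 hR1.le
    have hlhs_nn : 0 ≤ ρ * a ^ (r-1) := by
      rw [← heig v]
      exact Finset.sum_nonneg fun e _ => Finset.prod_nonneg fun j _ => (hx j).le
    have hρ0 : 0 ≤ ρ := by nlinarith [pow_pos ha (r-1)]
    set q : ℝ := (r:ℝ)/((r:ℝ)-1) with hq
    have hq0 : (0:ℝ) < q := by positivity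
    have h5 := Real.rpow_le_rpow hlhs_nn h4 hq0.le
    have hL : (ρ * a^(r-1)) ^ q = ρ ^ q * a ^ r := by
      rw [Real.mul_rpow hρ0 (pow_pos ha _).le]
      congr 1
      rw [← Real.rpow_natCast a (r-1), ← Real.rpow_mul ha.le, ← Real.rpow_natCast a r]
      congr 1
      rw [Nat.cast_sub (by omega : 1 ≤ r), Nat.cast_one, hq]
      field_simp
    have hRq : ((d:ℝ)^((1:ℝ)/(r:ℝ)) * ((1 - a^r)/((r:ℝ)-1)) ^ β) ^ q
        = (d:ℝ)^((1:ℝ)/((r:ℝ)-1)) * ((1 - a^r)/((r:ℝ)-1)) := by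
      rw [Real.mul_rpow (Real.rpow_nonneg hdpos.le _)
          (Real.rpow_nonneg (div_nonneg h1a hR1.le) _),
        ← Real.rpow_mul hdpos.le, ← Real.rpow_mul (div_nonneg h1a hR1.le),
        show (1:ℝ)/(r:ℝ) * q = 1/((r:ℝ)-1) by rw [hq]; field_simp,
        show β * q = 1 by rw [hβ, hq]; field_simp, Real.rpow_one]
    rw [hL, hRq] at h5
    set D : ℝ := (d:ℝ)^((1:ℝ)/((r:ℝ)-1)) with hD
    have hDpos : 0 < D := Real.rpow_pos_of_pos hdpos _
    have hρq : (ρ ^ r / (d:ℝ)) ^ ((1:ℝ)/((r:ℝ)-1)) = ρ ^ q / D := by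
      rw [Real.div_rpow (pow_nonneg hρ0 r) hdpos.le, hD]
      congr 1
      rw [← Real.rpow_natCast ρ r, ← Real.rpow_mul hρ0]
      congr 1
      rw [hq, mul_one_div]
    set K : ℝ := ((r:ℝ)-1) * (ρ^r/(d:ℝ))^((1:ℝ)/((r:ℝ)-1)) with hKdef
    have hK : K * a^r ≤ 1 - a^r := by
      have hstep := mul_le_mul_of_nonneg_left h5
        (by positivity : (0:ℝ) ≤ ((r:ℝ)-1) / D)
      calc K * a^r = ((r:ℝ)-1)/D * (ρ^q * a^r) := by rw [hKdef, hρq]; ring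
        _ ≤ ((r:ℝ)-1)/D * (D * ((1-a^r)/((r:ℝ)-1))) := hstep
        _ = 1 - a^r := by field_simp
    have hKnn : 0 ≤ K := mul_nonneg hR1.le
      (Real.rpow_nonneg (div_nonneg (pow_nonneg hρ0 r) hdpos.le) _)
    have h1K : (0:ℝ) < 1 + K := by linarith
    have h6 : a ^ r ≤ (1+K)⁻¹ := by
      rw [inv_eq_one_div, le_div_iff₀ h1K]
      nlinarith [hK]
    have hfin := Real.rpow_le_rpow (pow_nonneg ha.le r) h6
      (by positivity : (0:ℝ) ≤ 1/(r:ℝ))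
    rw [← Real.rpow_natCast a r, ← Real.rpow_mul ha.le, mul_one_div,
      div_self hR0.ne', Real.rpow_one] at hfin
    rw [show -(1:ℝ)/(r:ℝ) = -(1/(r:ℝ)) by ring]
    rwa [Real.inv_rpow h1K.le, ← Real.rpow_neg h1K.le] at hfin
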